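/- Let p be a prime with p > m + 1, where m ≥ 1. Then ∑_{p-1 ≥ n₁ ≥ n₂ ≥ ⋯ ≥ n_m ≥ 1} 1/(n₁^k ⋯ n_m^k) ≡ 0 (mod p) whenever p > mk + 1, where k ≥ 1; i.e., the truncated multiple zeta-star sum ζ_{p-1}^⋆({k}^m) vanishes modulo p. -/

import Mathlib

open Finset

variable {R : Type*} [CommRing R]

lemma stepB (x : ℕ → R) (V : Finset ℕ) (m j : ℕ) (hj : j ≤ m) (v : ℕ) (hv : v ∈ V) :
    ∑ M ∈ (V.sym m).filter (fun M => j ≤ M.1.count v), (M.1.map x).prod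
      = x v ^ j * ∑ M ∈ V.sym (m - j), (M.1.map x).prod := by
  rw [Finset.mul_sum]
  have hrep : ∀ M : Sym ℕ m, M ∈ (V.sym m).filter (fun M => j ≤ M.1.count v) →
      Multiset.replicate j v ≤ M.1 := by
    intro M hM
    rw [Finset.mem_filter] at hM
    exact Multiset.le_count_iff_replicate_le.mp hM.2
  refine Finset.sum_bij'
    (fun M hM => (⟨M.1 - Multiset.replicate j v, by
      rw [Multiset.card_sub (hrep M hM), M.2, Multiset.card_replicate]⟩ : Sym ℕ (m - j)))
    (fun M _ => (⟨M.1 + Multiset.replicate j v, by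
      rw [Multiset.card_add, M.2, Multiset.card_replicate]; omega⟩ : Sym ℕ m))
    ?_ ?_ ?_ ?_ ?_
  · -- maps into V.sym (m-j)
    intro M hM
    refine Finset.mem_sym_iff.mpr ?_
    intro a ha
    rw [Finset.mem_filter, Finset.mem_sym_iff] at hM
    replace ha : a ∈ M.1 - Multiset.replicate j v := ha
    exact hM.1 a (Multiset.mem_of_le (tsub_le_self) ha)
  · -- maps back into filter
    intro M hM
    refine Finset.mem_filter.mpr ?_
    constructor
    · rw [Finset.mem_sym_iff] at hM; refine Finset.mem_sym_iff.mpr ?_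
      intro a ha
      rcases Multiset.mem_add.mp ha with h | h
      · exact hM a h
      · rwa [Multiset.eq_of_mem_replicate h]
    · show j ≤ Multiset.count v (M.1 + Multiset.replicate j v)
      rw [Multiset.count_add, Multiset.count_replicate, if_pos rfl]
      omega
  · intro M hM
    exact Subtype.ext <| by
      show (M.1 - Multiset.replicate j v) + Multiset.replicate j v = M.1
      exact tsub_add_cancel_of_le (hrep M hM)
  · intro M hM
    exact Subtype.ext <| by simp
  · intro M hM
    have h := tsub_add_cancel_of_le (hrep M hM)
    calc (M.1.map x).prod
        = (((M.1 - Multiset.replicate j v) + Multiset.replicate j v).map x).prod := by rw [h]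
      _ = x v ^ j * ((M.1 - Multiset.replicate j v).map x).prod := by
          rw [Multiset.map_add, Multiset.prod_add, Multiset.map_replicate,
            Multiset.prod_replicate, mul_comm]

lemma stepA (x : ℕ → R) (V : Finset ℕ) (m : ℕ) (v : ℕ) :
    ∑ M ∈ V.sym m, (M.1.count v : R) * (M.1.map x).prod
      = ∑ j ∈ Icc 1 m, ∑ M ∈ (V.sym m).filter (fun M => j ≤ M.1.count v), (M.1.map x).prod := by
  simp_rw [Finset.sum_filter]
  rw [Finset.sum_comm]
  refine Finset.sum_congr rfl fun M hM => ?_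
  have hc : M.1.count v ≤ m := by
    have := Multiset.count_le_card v M.1
    rwa [M.2] at this
  rw [← Finset.sum_filter]
  have hf : (Icc 1 m).filter (fun j => j ≤ M.1.count v) = Icc 1 (M.1.count v) := by
    ext j
    simp only [Finset.mem_filter, Finset.mem_Icc]
    omega
  rw [hf, Finset.sum_const, Nat.card_Icc, nsmul_eq_mul]
  norm_num

lemma newton (x : ℕ → R) (V : Finset ℕ) (m : ℕ) :
    (m : R) * ∑ M ∈ V.sym m, (M.1.map x).prod
      = ∑ j ∈ Icc 1 m, (∑ v ∈ V, x v ^ j) * ∑ M ∈ V.sym (m - j), (M.1.map x).prod := by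
  rw [Finset.mul_sum]
  have key : ∀ M ∈ V.sym m,
      (m : R) * (M.1.map x).prod = ∑ v ∈ V, (M.1.count v : R) * (M.1.map x).prod := by
    intro M hM
    rw [← Finset.sum_mul]
    congr 1
    have hsub : M.1.toFinset ⊆ V := fun a ha =>
      (Finset.mem_sym_iff.mp hM) a (Multiset.mem_toFinset.mp ha)
    have hnat : ∑ v ∈ V, M.1.count v = m := by
      rw [← Finset.sum_subset hsub (fun a _ ha =>
        Multiset.count_eq_zero_of_notMem (fun h => ha (Multiset.mem_toFinset.mpr h)))]
      rw [Multiset.toFinset_sum_count_eq, M.2]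
    rw [← Nat.cast_sum, hnat]
  rw [Finset.sum_congr rfl key, Finset.sum_comm]
  rw [Finset.sum_congr rfl (fun v hv => stepA x V m v)]
  rw [Finset.sum_comm]
  refine Finset.sum_congr rfl fun j hj => ?_
  rw [Finset.sum_mul]
  refine Finset.sum_congr rfl fun v hv => ?_
  exact stepB x V m j (Finset.mem_Icc.mp hj).2 v hv

lemma bridge (x : ℕ → R) (V : Finset ℕ) (m : ℕ) :
    ∑ n ∈ Finset.filter (fun n : Fin m → ℕ => ∀ a b : Fin m, a ≤ b → n b ≤ n a)
        (Fintype.piFinset fun _ => V), ∏ i : Fin m, x (n i)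
      = ∑ M ∈ V.sym m, (M.1.map x).prod := by
  have hcoe : ∀ t : Fin m → ℕ, Multiset.map t Finset.univ.val = ↑(List.ofFn t) := by
    intro t; simp
  have hlen : ∀ M : Sym ℕ m, (Multiset.sort M.1 (· ≤ ·)).length = m := by
    intro M; rw [Multiset.length_sort, M.2]
  -- the sorted list of the multiset of an antitone tuple is the reversed ofFn list
  have hsort : ∀ t : Fin m → ℕ, (∀ a b : Fin m, a ≤ b → t b ≤ t a) →
      Multiset.sort (Multiset.map t Finset.univ.val) (· ≤ ·) = (List.ofFn t).reverse := by
    intro t ht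
    refine (fun hp hs₁ hs₂ => List.Perm.eq_of_pairwise' hs₁ hs₂ hp) (Multiset.coe_eq_coe.mp ?_)
      (Multiset.pairwise_sort _ _) ?_
    · rw [Multiset.sort_eq, hcoe, Multiset.coe_reverse]
    · rw [List.pairwise_reverse]
      rw [List.pairwise_iff_get]
      intro i j hij
      simp only [List.get_eq_getElem, List.getElem_ofFn]
      exact ht _ _ (by exact_mod_cast le_of_lt (by exact_mod_cast hij))
  refine Finset.sum_bij'
    (fun t ht => (⟨Multiset.map t Finset.univ.val, by simp⟩ : Sym ℕ m))
    (fun M hM => (fun idx : Fin m =>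
      (Multiset.sort M.1 (· ≤ ·)).get ⟨m - 1 - idx, by rw [hlen]; have := idx.isLt; omega⟩))
    ?_ ?_ ?_ ?_ ?_
  · -- into V.sym m
    intro t ht
    refine Finset.mem_sym_iff.mpr ?_
    intro a ha
    replace ha : a ∈ Multiset.map t Finset.univ.val := ha
    rw [Multiset.mem_map] at ha
    obtain ⟨i, _, rfl⟩ := ha
    exact Fintype.mem_piFinset.mp (Finset.mem_filter.mp ht).1 i
  · -- back into the filter
    intro M hM
    rw [Finset.mem_filter]
    constructor
    · rw [Fintype.mem_piFinset]
      intro idx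
      exact Finset.mem_sym_iff.mp hM _
        ((Multiset.mem_sort (· ≤ ·)).mp (List.get_mem _ _))
    · intro a b hab
      have hs := Multiset.pairwise_sort M.1 (· ≤ ·)
      rw [List.pairwise_iff_get] at hs
      have h1 : m - 1 - (b : ℕ) ≤ m - 1 - (a : ℕ) := by omega
      rcases lt_or_eq_of_le h1 with h | h
      · exact hs _ _ (Fin.mk_lt_mk.mpr h)
      · simp only [List.get_eq_getElem, h]
        exact le_refl _
  · -- left inverse
    intro t ht
    funext idx
    have ht' := fun a b hab => (Finset.mem_filter.mp ht).2 a b hab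
    simp only [List.get_eq_getElem]
    have hrw := hsort t ht'
    simp only [hrw]
    rw [List.getElem_reverse, List.getElem_ofFn]
    congr 1
    apply Fin.ext
    simp only [List.length_ofFn]
    have := idx.isLt
    omega
  · -- right inverse
    intro M hM
    refine Subtype.ext ?_
    show Multiset.map (fun idx : Fin m =>
        (Multiset.sort M.1 (· ≤ ·)).get ⟨m - 1 - idx, by rw [hlen]; have := idx.isLt; omega⟩)
      Finset.univ.val = M.1
    rw [hcoe]
    have : List.ofFn (fun idx : Fin m =>
        (Multiset.sort M.1 (· ≤ ·)).get ⟨m - 1 - idx, by rw [hlen]; have := idx.isLt; omega⟩)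
        = (Multiset.sort M.1 (· ≤ ·)).reverse := by
      refine List.ext_getElem (by simp [hlen]) ?_
      intro i h1 h2
      rw [List.getElem_ofFn, List.getElem_reverse]
      simp only [List.get_eq_getElem]
      congr 1
      rw [hlen]
    rw [this, Multiset.coe_reverse, Multiset.sort_eq]
  · -- weights
    intro t ht
    show ∏ i : Fin m, x (t i) = ((Multiset.map t Finset.univ.val).map x).prod
    rw [Multiset.map_map, Finset.prod_eq_multiset_prod]
    rfl

lemma psum_zero (p : ℕ) [Fact p.Prime] {i : ℕ} (h0 : 0 < i) (h1 : i < p - 1) :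
    ∑ v ∈ Icc 1 (p - 1), ((v : ZMod p)⁻¹) ^ i = 0 := by
  have hp : p.Prime := Fact.out
  have hp2 := hp.two_le
  have step1 : ∑ v ∈ Icc 1 (p - 1), ((v : ZMod p)⁻¹) ^ i
      = ∑ a ∈ (univ : Finset (ZMod p)).erase 0, (a⁻¹) ^ i := by
    refine Finset.sum_nbij' (fun v => (v : ZMod p)) (fun a => a.val) ?_ ?_ ?_ ?_ ?_
    · intro v hv
      rw [Finset.mem_Icc] at hv
      refine Finset.mem_erase.mpr ⟨?_, Finset.mem_univ _⟩
      intro h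
      have hd := (ZMod.natCast_eq_zero_iff v p).mp h
      have := Nat.le_of_dvd (by omega) hd
      omega
    · intro a ha
      have hane := (Finset.mem_erase.mp ha).1
      simp only [Finset.mem_Icc]
      have h1' : a.val ≠ 0 := fun h => hane ((ZMod.val_eq_zero a).mp h)
      have h2' := ZMod.val_lt a
      omega
    · intro v hv
      rw [Finset.mem_Icc] at hv
      exact ZMod.val_cast_of_lt (by omega)
    · intro a ha
      simp [ZMod.natCast_val, ZMod.cast_id]
    · intro v hv; rfl
  have step2 : ∑ a ∈ (univ : Finset (ZMod p)).erase 0, (a⁻¹) ^ i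
      = ∑ a ∈ (univ : Finset (ZMod p)).erase 0, a ^ i := by
    refine Finset.sum_nbij' (fun a => a⁻¹) (fun a => a⁻¹) ?_ ?_ ?_ ?_ ?_
    · intro a ha
      exact Finset.mem_erase.mpr
        ⟨inv_ne_zero (Finset.mem_erase.mp ha).1, Finset.mem_univ _⟩
    · intro a ha
      exact Finset.mem_erase.mpr
        ⟨inv_ne_zero (Finset.mem_erase.mp ha).1, Finset.mem_univ _⟩
    · intro a _; exact inv_inv a
    · intro a _; exact inv_inv a
    · intro a _; rfl
  have step3 : ∑ a ∈ (univ : Finset (ZMod p)).erase 0, a ^ i = 0 := by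
    have htot : ∑ a : ZMod p, a ^ i = 0 := by
      apply FiniteField.sum_pow_lt_card_sub_one
      rw [ZMod.card]; exact h1
    have h4 := Finset.add_sum_erase (univ : Finset (ZMod p)) (fun a => a ^ i)
      (Finset.mem_univ (0 : ZMod p))
    simp only [zero_pow h0.ne', zero_add] at h4
    rw [h4]
    exact htot
  rw [step1, step2, step3]

/-- For positive integers `m, k` and a prime `p > mk + 1`, the truncated multiple
zeta-star sum `ζ^⋆_{p-1}({k}^m) = ∑_{p-1 ≥ n₁ ≥ ⋯ ≥ n_m ≥ 1} 1/(n₁^k⋯n_m^k)`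
vanishes modulo `p`. -/
theorem zeta_star_truncated_vanishes (p m k : ℕ) (hp : p.Prime)
    (hm : 0 < m) (hk : 0 < k) (hbound : m * k + 1 < p) :
    haveI : Fact p.Prime := ⟨hp⟩
    ‖(((∑ n ∈ Finset.filter
          (fun n : Fin m → ℕ => ∀ a b : Fin m, a ≤ b → n b ≤ n a)
          (Fintype.piFinset fun _ => Finset.Icc 1 (p - 1)),
        ∏ i : Fin m, (1 : ℚ) / (n i : ℚ) ^ k) : ℚ) : ℚ_[p])‖
      ≤ (p : ℝ) ^ (-1 : ℤ) := by
  haveI : Fact p.Prime := ⟨hp⟩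
  have hp2 : 2 ≤ p := hp.two_le
  set V := Finset.Icc 1 (p - 1) with hV
  set T := Finset.filter (fun n : Fin m → ℕ => ∀ a b : Fin m, a ≤ b → n b ≤ n a)
      (Fintype.piFinset fun _ => V) with hT
  have hmemV : ∀ n ∈ T, ∀ i : Fin m, 1 ≤ n i ∧ n i ≤ p - 1 := by
    intro n hn i
    have := Fintype.mem_piFinset.mp (Finset.mem_filter.mp hn).1 i
    rwa [hV, Finset.mem_Icc] at this
  set c := (p - 1).factorial with hc
  have hdvd : ∀ n ∈ T, ∀ i : Fin m, n i ∣ c := fun n hn i =>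
    Nat.dvd_factorial (hmemV n hn i).1 (hmemV n hn i).2
  have hpc : ¬ p ∣ c := fun h => by
    have := (Nat.Prime.dvd_factorial hp).mp h; omega
  have hni_ne : ∀ n ∈ T, ∀ i : Fin m, ((n i : ZMod p)) ≠ 0 := by
    intro n hn i h
    have hd := (ZMod.natCast_eq_zero_iff (n i) p).mp h
    have h1 := (hmemV n hn i).1
    have h2 := (hmemV n hn i).2
    have := Nat.le_of_dvd (by omega) hd
    omega
  -- the key vanishing mod p
  have hS : ∑ n ∈ T, ∏ i : Fin m, ((n i : ZMod p))⁻¹ ^ k = 0 := by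
    have hmult : ∑ M ∈ V.sym m,
        (M.1.map (fun v : ℕ => ((v : ZMod p))⁻¹ ^ k)).prod = 0 := by
      have hnewton := newton (fun v : ℕ => ((v : ZMod p))⁻¹ ^ k) V m
      have hps : ∀ j ∈ Icc 1 m, (∑ v ∈ V, (((v : ZMod p))⁻¹ ^ k) ^ j) = 0 := by
        intro j hj
        rw [Finset.mem_Icc] at hj
        have : ∀ v ∈ V, (((v : ZMod p))⁻¹ ^ k) ^ j = ((v : ZMod p)⁻¹) ^ (k * j) := by
          intro v _; rw [← pow_mul]
        rw [Finset.sum_congr rfl this, hV]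
        refine psum_zero p (Nat.mul_pos hk hj.1) ?_
        have h2 : k * j ≤ m * k := by
          calc k * j ≤ k * m := Nat.mul_le_mul_left _ hj.2
            _ = m * k := mul_comm k m
        omega
      have hzero' : (m : ZMod p) * ∑ M ∈ V.sym m,
          (M.1.map (fun v : ℕ => ((v : ZMod p))⁻¹ ^ k)).prod = 0 := by
        rw [hnewton]
        exact Finset.sum_eq_zero fun j hj => by rw [hps j hj, zero_mul]
      have hm0 : ((m : ZMod p)) ≠ 0 := by
        rw [Ne, ZMod.natCast_eq_zero_iff]
        intro h
        have h3 := Nat.le_of_dvd hm h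
        have h4 : m ≤ m * k := Nat.le_mul_of_pos_right m hk
        omega
      exact (mul_eq_zero.mp hzero').resolve_left hm0
    exact (bridge (fun v : ℕ => ((v : ZMod p))⁻¹ ^ k) V m).trans hmult
  set N := ∑ n ∈ T, ∏ i : Fin m, (c / n i) ^ k with hN
  have hzero : (N : ZMod p) = 0 := by
    have hstep : (N : ZMod p)
        = (c : ZMod p) ^ (k * m) * ∑ n ∈ T, ∏ i : Fin m, ((n i : ZMod p))⁻¹ ^ k := by
      rw [hN, Finset.mul_sum]
      push_cast
      refine Finset.sum_congr rfl fun n hn => ?_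
      have hterm : ∀ i : Fin m, ((c / n i : ℕ) : ZMod p) ^ k
          = ((c : ZMod p) * ((n i : ZMod p))⁻¹) ^ k := by
        intro i
        congr 1
        rw [eq_mul_inv_iff_mul_eq₀ (hni_ne n hn i), ← Nat.cast_mul,
          Nat.div_mul_cancel (hdvd n hn i)]
      rw [Finset.prod_congr rfl fun i _ => hterm i]
      simp only [mul_pow, Finset.prod_mul_distrib, Finset.prod_const, Finset.card_univ,
        Fintype.card_fin]
      rw [← pow_mul]
    rw [hstep, hS, mul_zero]
  have hpN : p ∣ N := (ZMod.natCast_eq_zero_iff N p).mp hzero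
  -- rewrite the rational sum
  have hc0 : (c : ℚ) ≠ 0 := Nat.cast_ne_zero.mpr (Nat.factorial_ne_zero _)
  have hq : (∑ n ∈ T, ∏ i : Fin m, (1 : ℚ) / (n i : ℚ) ^ k)
      = (N : ℚ) / (c : ℚ) ^ (k * m) := by
    rw [eq_div_iff (pow_ne_zero _ hc0), Finset.sum_mul, hN]
    push_cast
    refine Finset.sum_congr rfl fun n hn => ?_
    have hterm : ∀ i : Fin m, ((c / n i : ℕ) : ℚ) = (c : ℚ) / (n i : ℚ) := by
      intro i
      have h0 : n i ≠ 0 := Nat.one_le_iff_ne_zero.mp (hmemV n hn i).1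
      exact Nat.cast_div (hdvd n hn i) (Nat.cast_ne_zero.mpr h0)
    have hL : ∏ i : Fin m, ((c / n i : ℕ) : ℚ) ^ k
        = ∏ i : Fin m, ((c : ℚ) ^ k * ((1 : ℚ) / (n i : ℚ) ^ k)) := by
      refine Finset.prod_congr rfl fun i _ => ?_
      rw [hterm i, div_pow, div_eq_mul_one_div]
    rw [hL, Finset.prod_mul_distrib, Finset.prod_const, Finset.card_univ,
      Fintype.card_fin, ← pow_mul]
    ring
  rw [hq]
  obtain ⟨N', hN'⟩ := hpN
  rw [hN']
  have hnorm : ‖((c : ℚ_[p]))‖ = 1 := by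
    have h1 : ‖((c : ℤ) : ℚ_[p])‖ ≤ 1 := Padic.norm_int_le_one (c : ℤ)
    have h2 : ¬ ‖((c : ℤ) : ℚ_[p])‖ < 1 := by
      rw [Padic.norm_intCast_lt_one_iff]
      exact_mod_cast fun h => hpc (by exact_mod_cast h)
    push_cast at h1 h2 ⊢
    linarith [lt_or_eq_of_le h1]
  have hN'le : ‖((N' : ℚ_[p]))‖ ≤ 1 := by
    have h5 := Padic.norm_int_le_one (p := p) (N' : ℤ)
    push_cast at h5
    exact h5
  push_cast
  rw [norm_div, norm_mul, norm_pow, hnorm, one_pow, div_one, Padic.norm_p,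
    zpow_neg_one]
  calc ((p : ℝ))⁻¹ * ‖((N' : ℚ_[p]))‖ ≤ ((p : ℝ))⁻¹ * 1 :=
        mul_le_mul_of_nonneg_left hN'le (by positivity)
    _ = ((p : ℝ))⁻¹ := mul_one _
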